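/- For 0 < q < 1 and real a with aq ≠ 1, aq² ≠ 1, aq³ ≠ 1, the functions η_k(a;q) := ∑_{n=0}^∞ (-1)^n q^{n(n-1)/2} ((1 - aq^{2n+1})/(1 - aq)) ((aq;q)_n/(q;q)_n) (q^{-n}+aq^{n+1})^k satisfy the recurrence η_{k+1}(a;q) = (1 + aq)·η_k(a;q) − q^{-k-1}(1 − aq²)(1 − aq³)·η_k(aq²;q) for all k ≥ 0. -/

import Mathlib

/-- The finite q-Pochhammer symbol `(x;q)_n = ∏_{k=0}^{n-1} (1 - x q^k)`. -/
noncomputable def qp (q x : ℝ) (n : ℕ) : ℝ := ∏ k ∈ Finset.range n, (1 - x * q ^ k)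

lemma qp_succ (q x : ℝ) (n : ℕ) : qp q x (n+1) = qp q x n * (1 - x * q ^ n) :=
  Finset.prod_range_succ _ _
lemma qp_shift (q x : ℝ) (n : ℕ) : qp q x (n+2) = (1-x) * (1-x*q) * qp q (x*q^2) n := by
  induction n with
  | zero => simp [qp, Finset.prod_range_succ]
  | succ m ih => rw [qp_succ, ih, qp_succ]; ring
lemma hT (n : ℕ) : (n+1)*n/2 = n*(n-1)/2 + n := by
  cases n with
  | zero => rfl
  | succ m =>
    simp only [Nat.add_sub_cancel]
    have h : (m+2)*(m+1) = (m+1)*m + (m+1)*2 := by ring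
    rw [h, Nat.add_mul_div_right _ _ (by norm_num : 0 < 2)]

noncomputable def cc (q a : ℝ) (n : ℕ) : ℝ :=
  (-1 : ℝ) ^ n * q ^ (n * (n - 1) / 2) *
      ((1 - a * q ^ (2 * n + 1)) / (1 - a * q)) *
      (qp q (a * q) n / qp q q n)

noncomputable def mu (q a : ℝ) (n : ℕ) : ℝ := q ^ (-(n : ℤ)) + a * q ^ (n + 1)

lemma mu_eq (q a : ℝ) (hq : q ≠ 0) (n : ℕ) : mu q a n = (q^n)⁻¹ + a * q^(n+1) := by
  rw [mu, zpow_neg, zpow_natCast]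

lemma qp_q_pos (q : ℝ) (hq0 : 0 < q) (hq1 : q < 1) (n : ℕ) : 0 < qp q q n := by
  apply Finset.prod_pos
  intro k _
  have : q * q ^ k ≤ q * 1 := by
    have := pow_le_one₀ hq0.le hq1.le (n := k)
    nlinarith
  nlinarith

lemma c_rec (q a : ℝ) (hq0 : 0 < q) (hq1 : q < 1) (h1 : a*q ≠ 1) (h3 : a*q^3 ≠ 1) (n : ℕ) :
    cc q a (n+1) * (mu q a (n+1) - (1 + a*q)) =
      -(q⁻¹ * (1 - a*q^2) * (1 - a*q^3)) * cc q (a*q^2) n := by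
  have hq : q ≠ 0 := hq0.ne'
  have hqn : (q:ℝ)^(n+1) ≠ 0 := pow_ne_zero _ hq
  have haq : (1:ℝ) - a*q ≠ 0 := sub_ne_zero.mpr (fun h => h1 h.symm)
  have haq3 : (1:ℝ) - a*q^3 ≠ 0 := sub_ne_zero.mpr (fun h => h3 h.symm)
  have hqq : qp q q n ≠ 0 := (qp_q_pos q hq0 hq1 n).ne'
  have hq1n : (1:ℝ) - q^(n+1) ≠ 0 := by
    have : q^(n+1) < 1 := pow_lt_one₀ hq0.le hq1 (by omega)
    linarith
  have hP : qp q (a*q) (n+1) * (1 - a*q^(n+2)) = (1-a*q)*(1-a*q^2) * qp q ((a*q^2)*q) n := by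
    have h2 := qp_shift q (a*q) n
    rw [qp_succ] at h2
    have e1 : a*q*q^(n+1) = a*q^(n+2) := by ring
    have e2 : a*q*q = a*q^2 := by ring
    have e3 : a*q*q^2 = (a*q^2)*q := by ring
    rw [e1, e2, e3] at h2
    exact h2
  have hmu : mu q a (n+1) - (1 + a*q) = (q^(n+1))⁻¹ * ((1 - q^(n+1)) * (1 - a*q^(n+2))) := by
    rw [mu_eq q a hq]
    field_simp
    ring
  have haq3' : (1:ℝ) - a*q^2*q ≠ 0 := by
    intro h; apply haq3; rw [← h]; ring
  have step : cc q a (n+1) * (mu q a (n+1) - (1 + a*q)) =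
      ((-1:ℝ)^(n+1) * q^(n*(n-1)/2) * q^n * (1-a*q^(2*(n+1)+1)) / (1-a*q)) *
        ((1-q^(n+1)) / (qp q q n * (1-q^(n+1)))) * (q^(n+1))⁻¹ *
        (qp q (a*q) (n+1) * (1-a*q^(n+2))) := by
    unfold cc
    simp only [Nat.add_sub_cancel]
    rw [hT, qp_succ q q n, hmu, pow_add]
    ring
  rw [step, hP]
  unfold cc
  field_simp
  ring

lemma qp_abs_le (q x : ℝ) (hq0 : 0 ≤ q) (hq1 : q ≤ 1) (n : ℕ) :
    |qp q x n| ≤ (1+|x|)^n := by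
  unfold qp
  rw [Finset.abs_prod]
  calc ∏ k ∈ Finset.range n, |1 - x*q^k| ≤ ∏ k ∈ Finset.range n, (1+|x|) := by
        apply Finset.prod_le_prod (fun k _ => abs_nonneg _)
        intro k _
        calc |1 - x*q^k| ≤ |(1:ℝ)| + |x*q^k| := abs_sub _ _
          _ ≤ 1 + |x| := by
              rw [abs_one, abs_mul, abs_pow, abs_of_nonneg hq0]
              have h1 : q^k ≤ 1 := pow_le_one₀ hq0 hq1
              have h2 : |x| * q^k ≤ |x| * 1 := by
                apply mul_le_mul_of_nonneg_left h1 (abs_nonneg x)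
              linarith
    _ = (1+|x|)^n := by rw [Finset.prod_const, Finset.card_range]

lemma qp_q_ge (q : ℝ) (hq0 : 0 < q) (hq1 : q < 1) (n : ℕ) : (1-q)^n ≤ qp q q n := by
  unfold qp
  calc (1-q)^n = ∏ _k ∈ Finset.range n, (1-q) := by
        rw [Finset.prod_const, Finset.card_range]
    _ ≤ ∏ k ∈ Finset.range n, (1 - q*q^k) := by
        apply Finset.prod_le_prod (fun k _ => by linarith)
        intro k _
        have h1 : q^k ≤ 1 := pow_le_one₀ hq0.le hq1.le
        nlinarith

lemma mu_abs_le (q a : ℝ) (hq0 : 0 < q) (hq1 : q < 1) (n : ℕ) :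
    |mu q a n| ≤ (1+|a|) * (q^n)⁻¹ := by
  rw [mu_eq q a hq0.ne']
  have hqn : (0:ℝ) < q^n := pow_pos hq0 n
  have hinv : (1:ℝ) ≤ (q^n)⁻¹ := (one_le_inv₀ hqn).mpr (pow_le_one₀ hq0.le hq1.le)
  calc |(q^n)⁻¹ + a*q^(n+1)| ≤ |(q^n)⁻¹| + |a*q^(n+1)| := abs_add_le _ _
    _ ≤ (q^n)⁻¹ + |a| * (q^n)⁻¹ := by
        rw [abs_of_pos (inv_pos.mpr hqn), abs_mul, abs_pow, abs_of_pos hq0]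
        have h1 : q^(n+1) ≤ 1 := pow_le_one₀ hq0.le hq1.le
        have : |a| * q^(n+1) ≤ |a| * (q^n)⁻¹ :=
          mul_le_mul_of_nonneg_left (le_trans h1 hinv) (abs_nonneg a)
        linarith
    _ = (1+|a|) * (q^n)⁻¹ := by ring

lemma summable_f (q a : ℝ) (hq0 : 0 < q) (hq1 : q < 1) (ha : a*q ≠ 1) (k : ℕ) :
    Summable (fun n : ℕ => cc q a n * mu q a n ^ k) := by
  have haq : (1:ℝ) - a*q ≠ 0 := sub_ne_zero.mpr (fun h => ha h.symm)
  have hq' : (0:ℝ) < 1 - q := by linarith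
  set C : ℝ := (1+|a|)^(k+1) / |1 - a*q| with hC
  set r : ℝ := (1+|a|) / ((1-q) * q^k) with hr
  have hCpos : 0 ≤ C := div_nonneg (by positivity) (abs_nonneg _)
  have hrpos : 0 < r := div_pos (by positivity) (by positivity)
  have hg : Summable (fun n : ℕ => C * r^n * q^(n*(n-1)/2)) := by
    apply summable_of_ratio_norm_eventually_le (r := 1/2) (by norm_num)
    have hev : ∀ᶠ n : ℕ in Filter.atTop, r * q^n ≤ 1/2 := by
      have h := (tendsto_pow_atTop_nhds_zero_of_lt_one hq0.le hq1).const_mul r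
      rw [mul_zero] at h
      exact h.eventually_le_const (by norm_num)
    filter_upwards [hev] with n hn
    have hrec : C * r^(n+1) * q^((n+1)*((n+1)-1)/2)
        = (C * r^n * q^(n*(n-1)/2)) * (r * q^n) := by
      simp only [Nat.add_sub_cancel]
      rw [hT, pow_add, pow_succ]
      ring
    rw [hrec]
    rw [Real.norm_eq_abs, Real.norm_eq_abs, abs_mul]
    have h2 : |r * q^n| ≤ 1/2 := by
      rw [abs_of_nonneg (by positivity)]; exact hn
    calc |C * r^n * q^(n*(n-1)/2)| * |r * q^n|
        ≤ |C * r^n * q^(n*(n-1)/2)| * (1/2) := by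
          apply mul_le_mul_of_nonneg_left h2 (abs_nonneg _)
      _ = 1/2 * |C * r^n * q^(n*(n-1)/2)| := by ring
  apply Summable.of_norm_bounded hg
  intro n
  have hqpq : 0 < qp q q n := qp_q_pos q hq0 hq1 n
  have hqT : (0:ℝ) < q^(n*(n-1)/2) := pow_pos hq0 _
  have hqn : (0:ℝ) < q^n := pow_pos hq0 n
  have e : |cc q a n| = q^(n*(n-1)/2) * (|1-a*q^(2*n+1)| / |1-a*q|) * (|qp q (a*q) n| / qp q q n) := by
    unfold cc
    rw [abs_mul, abs_mul, abs_mul, abs_pow, abs_neg, abs_one, one_pow, one_mul,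
      abs_div, abs_div, abs_of_pos hqT, abs_of_pos hqpq]
  have b1 : |cc q a n| ≤ q^(n*(n-1)/2) * ((1+|a|) / |1-a*q|) * ((1+|a|)^n / (1-q)^n) := by
    rw [e]
    have hnum : |1 - a*q^(2*n+1)| ≤ 1+|a| := by
      calc |1 - a*q^(2*n+1)| ≤ |(1:ℝ)| + |a*q^(2*n+1)| := abs_sub _ _
        _ ≤ 1 + |a| := by
            rw [abs_one, abs_mul, abs_pow, abs_of_pos hq0]
            have h1 : q^(2*n+1) ≤ 1 := pow_le_one₀ hq0.le hq1.le
            nlinarith [abs_nonneg a]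
    have hB : |qp q (a*q) n| ≤ (1+|a|)^n := by
      refine le_trans (qp_abs_le q (a*q) hq0.le hq1.le n) (pow_le_pow_left₀ (by positivity) ?_ n)
      have : |a*q| ≤ |a| := by
        rw [abs_mul, abs_of_pos hq0]
        nlinarith [abs_nonneg a]
      linarith
    have hCq : (1-q)^n ≤ qp q q n := qp_q_ge q hq0 hq1 n
    gcongr <;> first | exact hnum | exact hB | exact hCq | positivity | exact abs_pos.mpr haq
  have b2 : |mu q a n|^k ≤ ((1+|a|) * (q^n)⁻¹)^k :=
    pow_le_pow_left₀ (abs_nonneg _) (mu_abs_le q a hq0 hq1 n) k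
  have key : C * r^n * q^(n*(n-1)/2)
      = (q^(n*(n-1)/2) * ((1+|a|) / |1-a*q|) * ((1+|a|)^n / (1-q)^n)) * ((1+|a|) * (q^n)⁻¹)^k := by
    have hqk : ((q:ℝ)^k)^n = (q^n)^k := by rw [← pow_mul, ← pow_mul, Nat.mul_comm]
    rw [hC, hr, div_pow, mul_pow, hqk]
    rw [mul_pow ((1:ℝ)+|a|) ((q^n)⁻¹) k, inv_pow]
    rw [pow_succ ((1:ℝ)+|a|) k]
    field_simp
  rw [Real.norm_eq_abs, abs_mul, abs_pow, key]
  exact mul_le_mul b1 b2 (pow_nonneg (abs_nonneg _) k) (by positivity)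

/-- The moment function (A.8):
`η_k(a;q) = ∑_{n≥0} (-1)^n q^{n(n-1)/2} ((1-aq^{2n+1})/(1-aq)) ((aq;q)_n/(q;q)_n)
(q^{-n}+aq^{n+1})^k`. -/
noncomputable def eta (q a : ℝ) (k : ℕ) : ℝ :=
  ∑' n : ℕ,
    (-1 : ℝ) ^ n * q ^ (n * (n - 1) / 2) *
      ((1 - a * q ^ (2 * n + 1)) / (1 - a * q)) *
      (qp q (a * q) n / qp q q n) *
      (q ^ (-(n : ℤ)) + a * q ^ (n + 1)) ^ k

lemma eta_eq (q a : ℝ) (k : ℕ) : eta q a k = ∑' n, cc q a n * mu q a n ^ k := rfl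

lemma mu_shift (q a : ℝ) (hq : q ≠ 0) (n : ℕ) :
    mu q (a*q^2) n = q * mu q a (n+1) := by
  rw [mu_eq _ _ hq, mu_eq _ _ hq]
  have h : (q:ℝ)^(n+1) ≠ 0 := pow_ne_zero _ hq
  field_simp
  ring

/-- The recurrence
`η_{k+1}(a;q) = (1+aq) η_k(a;q) - q^{-k-1}(1-aq²)(1-aq³) η_k(aq²;q)`. -/
theorem eta_recurrence (q a : ℝ) (hq0 : 0 < q) (hq1 : q < 1)
    (h1 : a * q ≠ 1) (h2 : a * q ^ 2 ≠ 1) (h3 : a * q ^ 3 ≠ 1) (k : ℕ) :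
    eta q a (k + 1) =
      (1 + a * q) * eta q a k -
        (q ^ (k + 1))⁻¹ * (1 - a * q ^ 2) * (1 - a * q ^ 3) * eta q (a * q ^ 2) k := by
  have hq : q ≠ 0 := hq0.ne'
  have ha' : (a*q^2)*q ≠ 1 := by intro h; apply h3; rw [← h]; ring
  have hS1 : Summable (fun n => cc q a n * mu q a n ^ (k+1)) := summable_f q a hq0 hq1 h1 (k+1)
  have hS2 : Summable (fun n => cc q a n * mu q a n ^ k) := summable_f q a hq0 hq1 h1 k
  have hS3 : Summable (fun n => cc q (a*q^2) n * mu q (a*q^2) n ^ k) :=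
    summable_f q (a*q^2) hq0 hq1 ha' k
  set D : ℕ → ℝ := fun n => cc q a n * mu q a n ^ (k+1) - (1+a*q) * (cc q a n * mu q a n ^ k)
    with hD
  have hDS : Summable D := hS1.sub (hS2.mul_left _)
  have hD0 : D 0 = 0 := by
    have hmu0 : mu q a 0 = 1 + a*q := by
      rw [mu_eq _ _ hq]; norm_num
    simp only [hD, hmu0, pow_succ]
    ring
  have hDshift : ∀ n : ℕ, D (n+1) =
      (-((q^(k+1))⁻¹ * (1-a*q^2) * (1-a*q^3))) * (cc q (a*q^2) n * mu q (a*q^2) n ^ k) := by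
    intro n
    have hc := c_rec q a hq0 hq1 h1 h3 n
    have hm := mu_shift q a hq n
    have e1 : D (n+1) = (cc q a (n+1) * (mu q a (n+1) - (1+a*q))) * mu q a (n+1) ^ k := by
      simp only [hD, pow_succ]; ring
    rw [e1, hc, hm]
    rw [mul_pow, pow_succ]
    field_simp
    ring
  -- tsum computations
  have t1 : ∑' n, D n = eta q a (k+1) - (1+a*q) * eta q a k := by
    rw [eta_eq, eta_eq]
    exact (hS1.hasSum.sub (hS2.hasSum.mul_left (1+a*q))).tsum_eq
  have t2 : ∑' n, D n = ∑' n, D (n+1) := by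
    rw [Summable.tsum_eq_zero_add hDS, hD0, zero_add]
  have t3 : ∑' n, D (n+1) =
      (-((q^(k+1))⁻¹ * (1-a*q^2) * (1-a*q^3))) * eta q (a*q^2) k := by
    rw [eta_eq, ← tsum_mul_left]
    exact tsum_congr hDshift
  have := t1.symm.trans (t2.trans t3)
  linarith [this]
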